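/- Dynamic programming (Bellman) principle for strongly time consistent certainty equivalents: suppose for each t ∈ {0,…,T} a map C_t from adapted processes to F_t-measurable real-valued random variables is given such that (a) (certainty-equivalent property) for every t ≤ T−1 and every adapted process X, C_{t+1}(X^{t, C_{t+1}(X)}) = C_{t+1}(X) P-a.s., and (b) (strong time consistency) for every t ≤ T−1 and all adapted processes X, Y with X_s = Y_s P-a.s. for all s ≤ t, if C_{t+1}(X) ≥ C_{t+1}(Y) P-a.s. then C_t(X) ≥ C_t(Y) P-a.s. Then for every t ≤ T−1 and every adapted process X: C_t(X) = C_t(X^{t, C_{t+1}(X)}) P-a.s. -/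
import Mathlib


open MeasureTheory

variable {Ω : Type*} {m0 : MeasurableSpace Ω}

/-- An adapted process with horizon `T`. -/
def AdaptedTo (ℱ : Filtration ℕ m0) (T : ℕ) (X : ℕ → Ω → ℝ) : Prop :=
  ∀ s ≤ T, Measurable[ℱ s] (X s)

/-- The process `X^{t,c}`, equal to `X_s` for `s ≤ t` and to `c` afterwards
(i.e. `X_{[0,t]} + c·1_{[t+1,T]}`). -/
def stopAt (X : ℕ → Ω → ℝ) (t : ℕ) (c : Ω → ℝ) : ℕ → Ω → ℝ :=
  fun s => if s ≤ t then X s else c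

/-- Dynamic programming (Bellman) principle for strongly time consistent certainty
equivalents: if each `C_t` maps adapted processes to `F_t`-measurable random variables and
satisfies the certainty-equivalent property `C_{t+1}(X^{t, C_{t+1}(X)}) = C_{t+1}(X)` a.s.
as well as strong time consistency, then `C_t(X) = C_t(X^{t, C_{t+1}(X)})` a.s. for every
adapted `X` and every `t ≤ T - 1`. -/
theorem bellman_principle (ℱ : Filtration ℕ m0) (P : Measure Ω)
    [IsProbabilityMeasure P] (T : ℕ)
    (C : ℕ → (ℕ → Ω → ℝ) → Ω → ℝ)
    (hmeas : ∀ t ≤ T, ∀ X : ℕ → Ω → ℝ, AdaptedTo ℱ T X → Measurable[ℱ t] (C t X))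
    (hCE : ∀ t : ℕ, t + 1 ≤ T → ∀ X : ℕ → Ω → ℝ, AdaptedTo ℱ T X →
      C (t + 1) (stopAt X t (C (t + 1) X)) =ᵐ[P] C (t + 1) X)
    (hTC : ∀ t : ℕ, t + 1 ≤ T → ∀ X Y : ℕ → Ω → ℝ,
      AdaptedTo ℱ T X → AdaptedTo ℱ T Y → (∀ s ≤ t, X s =ᵐ[P] Y s) →
      C (t + 1) Y ≤ᵐ[P] C (t + 1) X → C t Y ≤ᵐ[P] C t X) :
    ∀ t : ℕ, t + 1 ≤ T → ∀ X : ℕ → Ω → ℝ, AdaptedTo ℱ T X →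
      C t X =ᵐ[P] C t (stopAt X t (C (t + 1) X)) := by
  intro t ht X hX
  set Y := stopAt X t (C (t + 1) X) with hY
  have hYad : AdaptedTo ℱ T Y := by
    intro s hs
    by_cases h : s ≤ t
    · simpa [hY, stopAt, h] using hX s hs
    · have h1 : t + 1 ≤ s := Nat.succ_le_of_lt (Nat.lt_of_not_le h)
      have := hmeas (t + 1) ht X hX
      simpa [hY, stopAt, h] using this.mono (ℱ.mono h1) le_rfl
  have hEq : C (t + 1) Y =ᵐ[P] C (t + 1) X := hCE t ht X hX
  have hsame : ∀ s ≤ t, X s =ᵐ[P] Y s := fun s hs => by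
    simp [hY, stopAt, hs]
  have h1 : C t Y ≤ᵐ[P] C t X :=
    hTC t ht X Y hX hYad hsame (hEq.le)
  have h2 : C t X ≤ᵐ[P] C t Y :=
    hTC t ht Y X hYad hX (fun s hs => (hsame s hs).symm) (hEq.symm.le)
  exact h2.antisymm h1
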